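/- Let Γ be a group with finite generating set S and H ≤ Γ a subgroup of finite index k. Then the inclusion map H → Γ, where H is equipped with the word metric of some finite generating set and Γ with the word metric of S, is a quasi-(1/k)-to-one quasi-isometry. -/

import Mathlib

open Set

/-- Closed `R`-neighborhood of a vertex set in a graph, for the graph metric. -/
def gNbhd {X : Type*} (G : SimpleGraph X) (A : Set X) (R : ℕ) : Set X :=
  {x | ∃ a ∈ A, G.dist x a ≤ R}

/-- `R`-boundary `∂_R A := A^{+R} ∩ (complement A)^{+R}`. -/
def gBdryR {X : Type*} (G : SimpleGraph X) (A : Set X) (R : ℕ) : Set X :=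
  gNbhd G A R ∩ gNbhd G Aᶜ R

/-- Outer boundary `∂A := A^{+1} \ A`. -/
def gBdry {X : Type*} (G : SimpleGraph X) (A : Set X) : Set X :=
  gNbhd G A 1 \ A

/-- All vertex degrees are at most `D`. -/
def BddDeg {X : Type*} (G : SimpleGraph X) (D : ℕ) : Prop :=
  ∀ v, (G.neighborSet v).ncard ≤ D

/-- `f` is a `(C,K)`-quasi-isometry for the graph metrics. -/
def IsQIWith {X Y : Type*} (G : SimpleGraph X) (H : SimpleGraph Y) (C K : ℝ)
    (f : X → Y) : Prop :=
  (∀ x y : X, (1 / C) * (G.dist x y : ℝ) - K ≤ (H.dist (f x) (f y) : ℝ) ∧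
    (H.dist (f x) (f y) : ℝ) ≤ C * (G.dist x y : ℝ) + K) ∧
  ∀ y : Y, ∃ x : X, (H.dist y (f x) : ℝ) ≤ K

/-- `f` is a quasi-isometry for the graph metrics. -/
def IsQI {X Y : Type*} (G : SimpleGraph X) (H : SimpleGraph Y) (f : X → Y) : Prop :=
  ∃ C K : ℝ, 1 ≤ C ∧ 0 ≤ K ∧ IsQIWith G H C K f

/-- `f : X → Y` is quasi-`κ`-to-one: `|κ|A| - |f⁻¹(A)|| ≤ C|∂A|` for all finite `A ⊆ Y`. -/
def QuasiKToOne {X Y : Type*} (H : SimpleGraph Y) (f : X → Y) (κ : ℝ) : Prop :=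
  ∃ C : ℝ, 0 < C ∧ ∀ A : Set Y, A.Finite →
    |κ * (A.ncard : ℝ) - ((f ⁻¹' A).ncard : ℝ)| ≤ C * ((gBdry H A).ncard : ℝ)

/-- Amenability via a Følner sequence: finite nonempty sets with vanishing
boundary-to-size ratio. -/
def IsAmenableGraph {X : Type*} (G : SimpleGraph X) : Prop :=
  ∃ A : ℕ → Set X, (∀ n, (A n).Finite ∧ (A n).Nonempty) ∧
    Filter.Tendsto (fun n => ((gBdry G (A n)).ncard : ℝ) / ((A n).ncard : ℝ))
      Filter.atTop (nhds 0)

/-- The Cayley graph of a group with respect to a (symmetrized) generating set. -/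
def cayley (Γ : Type*) [Group Γ] (S : Set Γ) : SimpleGraph Γ where
  Adj x y := x ≠ y ∧ (x⁻¹ * y ∈ S ∨ y⁻¹ * x ∈ S)
  symm := by
    constructor
    intro x y h
    exact ⟨h.1.symm, h.2.symm⟩
  loopless := by
    constructor
    intro x h
    exact h.1 rfl

section Auxiliary
variable {Γ' : Type*} [Group Γ'] {S' : Set Γ'}

/-- Left multiplication as a graph homomorphism of the Cayley graph. -/
def cayleyHom (S : Set Γ') (g : Γ') : cayley Γ' S →g cayley Γ' S where
  toFun x := g * x
  map_rel' := by
    rintro x y ⟨hne, h⟩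
    refine ⟨by simpa using hne, ?_⟩
    simpa [mul_assoc] using h

lemma cayley_reachable_mul (g : Γ') {x y : Γ'}
    (h : (cayley Γ' S').Reachable x y) :
    (cayley Γ' S').Reachable (g * x) (g * y) := by
  obtain ⟨w⟩ := h
  exact ⟨w.map (cayleyHom S' g)⟩

lemma cayley_dist_mul_le (g : Γ') (x y : Γ') :
    (cayley Γ' S').dist (g * x) (g * y) ≤ (cayley Γ' S').dist x y := by
  by_cases h : (cayley Γ' S').Reachable x y
  · obtain ⟨w, hw⟩ := h.exists_walk_length_eq_dist
    calc (cayley Γ' S').dist (g * x) (g * y) ≤ (w.map (cayleyHom S' g)).length :=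
          SimpleGraph.dist_le _
      _ = (cayley Γ' S').dist x y := by rw [SimpleGraph.Walk.length_map, hw]
  · have h2 : ¬ (cayley Γ' S').Reachable (g * x) (g * y) := by
      intro hr
      have := cayley_reachable_mul g⁻¹ hr
      simp only [inv_mul_cancel_left] at this
      exact h this
    rw [SimpleGraph.dist_eq_zero_of_not_reachable h2,
      SimpleGraph.dist_eq_zero_of_not_reachable h]

lemma cayley_dist_mul (g : Γ') (x y : Γ') :
    (cayley Γ' S').dist (g * x) (g * y) = (cayley Γ' S').dist x y := by
  refine le_antisymm (cayley_dist_mul_le g x y) ?_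
  have := cayley_dist_mul_le (S' := S') g⁻¹ (g * x) (g * y)
  simpa using this

lemma cayley_connected (hSgen : Subgroup.closure S' = ⊤) :
    (cayley Γ' S').Connected := by
  have h1 : ∀ g : Γ', (cayley Γ' S').Reachable 1 g := by
    intro g
    have hg : g ∈ Subgroup.closure S' := by rw [hSgen]; trivial
    induction hg using Subgroup.closure_induction with
    | mem x hx =>
      by_cases hx1 : x = 1
      · rw [hx1]
      · exact SimpleGraph.Adj.reachable ⟨Ne.symm hx1, Or.inl (by simpa using hx)⟩
    | one => rfl
    | mul x y hx hy ihx ihy =>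
      exact ihx.trans (by simpa using cayley_reachable_mul (S' := S') x ihy)
    | inv x hx ihx =>
      have := cayley_reachable_mul (S' := S') x⁻¹ ihx
      simpa using this.symm
  constructor
  intro x y
  exact (h1 x).symm.trans (h1 y)

lemma cayley_dist_eq (x y : Γ') :
    (cayley Γ' S').dist x y = (cayley Γ' S').dist 1 (x⁻¹ * y) := by
  have := cayley_dist_mul (S' := S') x⁻¹ x y
  simpa using this.symm

lemma cayley_dist_one_inv (g : Γ') :
    (cayley Γ' S').dist 1 g⁻¹ = (cayley Γ' S').dist 1 g := by
  have := cayley_dist_mul (S' := S') g 1 g⁻¹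
  simp only [mul_one, mul_inv_cancel] at this
  rw [← this, SimpleGraph.dist_comm]

lemma cayley_neighborSet_subset (v : Γ') :
    (cayley Γ' S').neighborSet v ⊆ (fun s => v * s) '' (S' ∪ S'⁻¹) := by
  rintro y ⟨hne, h⟩
  rcases h with h | h
  · exact ⟨v⁻¹ * y, Or.inl h, by group⟩
  · exact ⟨v⁻¹ * y, Or.inr (by simpa using h), by group⟩

lemma cayley_neighborSet_finite (hS : S'.Finite) (v : Γ') :
    ((cayley Γ' S').neighborSet v).Finite :=
  ((hS.union hS.inv).image _).subset (cayley_neighborSet_subset v)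

lemma cayley_neighborSet_ncard (hS : S'.Finite) (v : Γ') :
    ((cayley Γ' S').neighborSet v).ncard ≤ (S' ∪ S'⁻¹).ncard := by
  have h := cayley_neighborSet_subset (S' := S') v
  calc ((cayley Γ' S').neighborSet v).ncard
      ≤ ((fun s => v * s) '' (S' ∪ S'⁻¹)).ncard :=
        Set.ncard_le_ncard h ((hS.union hS.inv).image _)
    _ ≤ (S' ∪ S'⁻¹).ncard := Set.ncard_image_le (hS.union hS.inv)

end Auxiliary

section Growth
variable {V : Type*} {G : SimpleGraph V}

lemma subset_gNbhd (A : Set V) (r : ℕ) : A ⊆ gNbhd G A r :=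
  fun a ha => ⟨a, ha, by rw [SimpleGraph.dist_self]; exact Nat.zero_le r⟩

lemma gNbhd_zero (hc : G.Connected) (A : Set V) : gNbhd G A 0 = A := by
  refine le_antisymm ?_ (subset_gNbhd A 0)
  rintro x ⟨a, ha, hd⟩
  have : x = a := hc.dist_eq_zero_iff.mp (Nat.le_zero.mp hd)
  rwa [this]

lemma gNbhd_one_subset (hc : G.Connected) (A : Set V) :
    gNbhd G A 1 ⊆ A ∪ ⋃ a ∈ A, G.neighborSet a := by
  rintro x ⟨a, ha, hd⟩
  rcases Nat.le_one_iff_eq_zero_or_eq_one.mp hd with h0 | h1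
  · left; rwa [hc.dist_eq_zero_iff.mp h0]
  · right
    have hadj : G.Adj x a := SimpleGraph.dist_eq_one_iff_adj.mp h1
    exact Set.mem_biUnion ha hadj.symm

lemma gNbhd_succ_subset (hc : G.Connected) (A : Set V) (r : ℕ) :
    gNbhd G A (r + 1) ⊆ gNbhd G (gNbhd G A 1) r := by
  rintro x ⟨a, ha, hd⟩
  obtain ⟨w, hw⟩ := hc.exists_walk_length_eq_dist a x
  cases w with
  | nil =>
    exact ⟨_, subset_gNbhd A 1 ha, by rw [SimpleGraph.dist_self]; exact Nat.zero_le r⟩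
  | cons hadj p =>
    rename_i b
    refine ⟨b, ⟨a, ha, SimpleGraph.dist_le hadj.symm.toWalk⟩, ?_⟩
    have hlen : p.length + 1 = G.dist a x := by simpa using hw
    have h2 : G.dist b x ≤ p.length := SimpleGraph.dist_le p
    have h3 : G.dist x b = G.dist b x := SimpleGraph.dist_comm
    have h4 : G.dist a x = G.dist x a := SimpleGraph.dist_comm
    omega

lemma gNbhd_finite_ncard (hc : G.Connected) {D : ℕ}
    (hfin : ∀ v, (G.neighborSet v).Finite)
    (hdeg : ∀ v, (G.neighborSet v).ncard ≤ D) :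
    ∀ (r : ℕ) (A : Set V), A.Finite →
      (gNbhd G A r).Finite ∧ (gNbhd G A r).ncard ≤ (D + 1) ^ r * A.ncard := by
  have key1 : ∀ (A : Set V), A.Finite → (gNbhd G A 1).Finite ∧
      (gNbhd G A 1).ncard ≤ (D + 1) * A.ncard := by
    intro A hA
    classical
    have hsub := gNbhd_one_subset hc A
    have hBig : (A ∪ ⋃ a ∈ A, G.neighborSet a).Finite :=
      hA.union (hA.biUnion (fun a _ => hfin a))
    refine ⟨hBig.subset hsub, ?_⟩
    set Af := hA.toFinset with hAf
    have hsub2 : gNbhd G A 1 ⊆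
        ↑(Af ∪ Af.biUnion (fun a => (hfin a).toFinset)) := by
      intro x hx
      rcases hsub hx with h | h
      · simp [hAf, Finset.mem_union, hA.mem_toFinset, h]
      · obtain ⟨a, ha, hxa⟩ := Set.mem_iUnion₂.mp h
        push_cast
        simp only [Finset.coe_union, Set.mem_union, Finset.coe_biUnion, Set.mem_iUnion]
        right
        exact ⟨a, by simpa [hAf] using ha, by simpa using hxa⟩
    calc (gNbhd G A 1).ncard
        ≤ (↑(Af ∪ Af.biUnion (fun a => (hfin a).toFinset)) : Set V).ncard :=
          Set.ncard_le_ncard hsub2 (Finset.finite_toSet _)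
      _ = (Af ∪ Af.biUnion (fun a => (hfin a).toFinset)).card := Set.ncard_coe_finset _
      _ ≤ Af.card + (Af.biUnion (fun a => (hfin a).toFinset)).card := Finset.card_union_le _ _
      _ ≤ Af.card + ∑ a ∈ Af, ((hfin a).toFinset).card := by
          gcongr
          exact Finset.card_biUnion_le
      _ ≤ Af.card + ∑ a ∈ Af, D := by
          gcongr with a ha
          have := hdeg a
          rwa [Set.ncard_eq_toFinset_card _ (hfin a)] at this
      _ = Af.card + Af.card * D := by rw [Finset.sum_const, smul_eq_mul]
      _ ≤ (D + 1) * A.ncard := by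
          have : A.ncard = Af.card := Set.ncard_eq_toFinset_card A hA
          rw [this]; ring_nf; omega
  intro r
  induction r with
  | zero =>
    intro A hA
    rw [gNbhd_zero hc A]
    simpa using hA
  | succ n ih =>
    intro A hA
    obtain ⟨hfin1, hcard1⟩ := key1 A hA
    obtain ⟨hfinn, hcardn⟩ := ih (gNbhd G A 1) hfin1
    have hsub := gNbhd_succ_subset hc A n
    constructor
    · exact hfinn.subset hsub
    · calc (gNbhd G A (n + 1)).ncard ≤ (gNbhd G (gNbhd G A 1) n).ncard :=
            Set.ncard_le_ncard hsub hfinn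
        _ ≤ (D + 1) ^ n * (gNbhd G A 1).ncard := hcardn
        _ ≤ (D + 1) ^ n * ((D + 1) * A.ncard) := by gcongr
        _ = (D + 1) ^ (n + 1) * A.ncard := by ring

/-- First exit point: a walk from inside `A` to outside passes through `gBdry A`. -/
lemma exists_bdry_of_walk (hc : G.Connected) {A : Set V} :
    ∀ {x y : V} (w : G.Walk x y), x ∈ A → y ∉ A →
      ∃ z ∈ gBdry G A, G.dist x z ≤ w.length := by
  intro x y w
  induction w with
  | nil => intro hx hy; exact absurd hx hy
  | cons hadj p ih =>
    rename_i a b c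
    intro hx hy
    by_cases hb : b ∈ A
    · obtain ⟨z, hz, hdz⟩ := ih hb hy
      refine ⟨z, hz, ?_⟩
      calc G.dist a z ≤ G.dist a b + G.dist b z := hc.dist_triangle
        _ ≤ 1 + p.length := by
            have h1 : G.dist a b ≤ 1 := SimpleGraph.dist_le hadj.toWalk
            omega
        _ = (SimpleGraph.Walk.cons hadj p).length := by simp [add_comm]
    · refine ⟨b, ⟨⟨a, hx, SimpleGraph.dist_le hadj.symm.toWalk⟩, hb⟩, ?_⟩
      have : G.dist a b ≤ 1 := SimpleGraph.dist_le hadj.toWalk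
      simp only [SimpleGraph.Walk.length_cons]
      omega

lemma mem_gNbhd_bdry (hc : G.Connected) {A : Set V} {x y : V} {R : ℕ}
    (hx : x ∈ A) (hy : y ∉ A) (hd : G.dist x y ≤ R) :
    x ∈ gNbhd G (gBdry G A) R := by
  obtain ⟨w, hw⟩ := hc.exists_walk_length_eq_dist x y
  obtain ⟨z, hz, hdz⟩ := exists_bdry_of_walk hc w hx hy
  exact ⟨z, hz, by omega⟩

end Growth

lemma count_shift {Γ : Type*} [Group Γ] {S : Set Γ}
    (hc : (cayley Γ S).Connected) {A : Set Γ} (hA : A.Finite) {R : ℕ}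
    (hB : (gNbhd (cayley Γ S) (gBdry (cayley Γ S) A) R).Finite)
    (P Q : Set Γ) (g : Γ) (hPQ : ∀ x ∈ P, x * g ∈ Q)
    (hg : (cayley Γ S).dist 1 g ≤ R) :
    (A ∩ P).ncard ≤ (A ∩ Q).ncard +
      (gNbhd (cayley Γ S) (gBdry (cayley Γ S) A) R).ncard := by
  set G := cayley Γ S
  have hsub : A ∩ P ⊆ ((Equiv.mulRight g) ⁻¹' (A ∩ Q)) ∪ gNbhd G (gBdry G A) R := by
    rintro x ⟨hxA, hxP⟩
    by_cases hxg : x * g ∈ A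
    · exact Or.inl ⟨hxg, hPQ x hxP⟩
    · refine Or.inr (mem_gNbhd_bdry hc hxA hxg ?_)
      calc G.dist x (x * g) = G.dist 1 (x⁻¹ * (x * g)) := cayley_dist_eq x (x * g)
        _ = G.dist 1 g := by rw [inv_mul_cancel_left]
        _ ≤ R := hg
  have hpre : ((Equiv.mulRight g) ⁻¹' (A ∩ Q)).ncard = (A ∩ Q).ncard := by
    rw [← Equiv.image_symm_eq_preimage]
    exact Set.ncard_image_of_injective _ (Equiv.injective _)
  calc (A ∩ P).ncard
      ≤ (((Equiv.mulRight g) ⁻¹' (A ∩ Q)) ∪ gNbhd G (gBdry G A) R).ncard := by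
        refine Set.ncard_le_ncard hsub ?_
        refine Set.Finite.union ?_ hB
        rw [← Equiv.image_symm_eq_preimage]
        exact ((hA.inter_of_left Q).image _)
    _ ≤ ((Equiv.mulRight g) ⁻¹' (A ∩ Q)).ncard + (gNbhd G (gBdry G A) R).ncard :=
        Set.ncard_union_le _ _
    _ = (A ∩ Q).ncard + (gNbhd G (gBdry G A) R).ncard := by rw [hpre]
/-- The inclusion of a finite-index subgroup `H ≤ Γ` of index `k`
(with respect to word metrics of finite generating sets) is a quasi-`(1/k)`-to-one
quasi-isometry. -/
theorem inclusion_quasiOneOverKToOne {Γ : Type*} [Group Γ]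
    (S : Set Γ) (hSfin : S.Finite) (hSgen : Subgroup.closure S = ⊤)
    (H : Subgroup Γ) (k : ℕ) (hk : 0 < k) (hidx : H.index = k)
    (T : Set H) (hTfin : T.Finite) (hTgen : Subgroup.closure T = ⊤) :
    IsQI (cayley H T) (cayley Γ S) ((↑) : H → Γ) ∧
      QuasiKToOne (cayley Γ S) ((↑) : H → Γ) (1 / (k : ℝ)) := by
  classical
  set G := cayley Γ S with hGdef
  set GH := cayley (↥H) T with hGHdef
  have hcΓ : G.Connected := cayley_connected hSgen
  have hcH : GH.Connected := cayley_connected hTgen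
  -- quotient setup
  have hfinQ : Finite (Γ ⧸ H) := by
    refine Nat.finite_of_card_ne_zero ?_
    rw [← Subgroup.index_eq_card, hidx]
    omega
  have : Fintype (Γ ⧸ H) := Fintype.ofFinite _
  have hcardQ : Fintype.card (Γ ⧸ H) = k := by
    rw [← Nat.card_eq_fintype_card, ← Subgroup.index_eq_card, hidx]
  set q : Γ → Γ ⧸ H := fun x => ((x⁻¹ : Γ) : Γ ⧸ H) with hqdef
  have hq_iff : ∀ x y : Γ, q x = q y ↔ x * y⁻¹ ∈ H := by
    intro x y
    show (((x⁻¹ : Γ) : Γ ⧸ H) = ((y⁻¹ : Γ) : Γ ⧸ H)) ↔ _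
    rw [QuotientGroup.eq, inv_inv]
  set γfun : Γ ⧸ H → Γ := fun c => (Quotient.out c)⁻¹ with hγdef
  have hqγ : ∀ c, q (γfun c) = c := by
    intro c
    show ((((Quotient.out c)⁻¹)⁻¹ : Γ) : Γ ⧸ H) = c
    rw [inv_inv]
    exact Quotient.out_eq c
  set R : ℕ := Finset.univ.sup (fun c : Γ ⧸ H => G.dist 1 (γfun c)) with hRdef
  have hγR : ∀ c, G.dist 1 (γfun c) ≤ R := fun c =>
    Finset.le_sup (f := fun c : Γ ⧸ H => G.dist 1 (γfun c)) (Finset.mem_univ c)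
  -- projection to H
  have hσmem : ∀ x : Γ, x * (γfun (q x))⁻¹ ∈ H := by
    intro x
    exact (hq_iff x (γfun (q x))).mp (hqγ (q x)).symm
  set σ : Γ → ↥H :=
    fun x => if hx : x ∈ H then (⟨x, hx⟩ : ↥H) else ⟨x * (γfun (q x))⁻¹, hσmem x⟩ with hσdef
  have hσdist : ∀ x : Γ, G.dist x ((σ x : Γ)) ≤ R := by
    intro x
    by_cases hx : x ∈ H
    · simp only [hσdef, dif_pos hx]
      rw [SimpleGraph.dist_self]
      exact Nat.zero_le R
    · simp only [hσdef, dif_neg hx]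
      calc G.dist x (x * (γfun (q x))⁻¹)
          = G.dist 1 (x⁻¹ * (x * (γfun (q x))⁻¹)) := cayley_dist_eq _ _
        _ = G.dist 1 ((γfun (q x))⁻¹) := by rw [inv_mul_cancel_left]
        _ = G.dist 1 (γfun (q x)) := cayley_dist_one_inv _
        _ ≤ R := hγR _
  have hσH : ∀ h : ↥H, σ (h : Γ) = h := by
    intro h
    simp only [hσdef, dif_pos h.2]
  -- degree / growth data
  have growth := gNbhd_finite_ncard hcΓ (cayley_neighborSet_finite hSfin)
    (cayley_neighborSet_ncard hSfin)
  set D : ℕ := (S ∪ S⁻¹).ncard with hDdef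
  -- Part 1: quasi-isometry, upper bound
  set L : ℕ := hTfin.toFinset.sup (fun t => G.dist 1 (t : Γ)) with hLdef
  have hedgeU : ∀ a b : ↥H, GH.Adj a b → G.dist (a : Γ) (b : Γ) ≤ L := by
    intro a b hab
    obtain ⟨hne, hmem⟩ := hab
    have hrw : G.dist (a : Γ) (b : Γ) = G.dist 1 ((a⁻¹ * b : ↥H) : Γ) := by
      rw [cayley_dist_eq]
      push_cast
      rfl
    rcases hmem with ht | ht
    · rw [hrw]
      exact Finset.le_sup (f := fun t : ↥H => G.dist 1 (t : Γ)) (hTfin.mem_toFinset.mpr ht)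
    · rw [hrw]
      have heq : ((a⁻¹ * b : ↥H) : Γ) = (((b⁻¹ * a : ↥H) : Γ))⁻¹ := by
        push_cast
        group
      rw [heq, cayley_dist_one_inv]
      exact Finset.le_sup (f := fun t : ↥H => G.dist 1 (t : Γ)) (hTfin.mem_toFinset.mpr ht)
  have hup : ∀ (a b : ↥H) (w : GH.Walk a b), G.dist (a : Γ) (b : Γ) ≤ L * w.length := by
    intro a b w
    induction w with
    | nil => rw [SimpleGraph.dist_self]; exact Nat.zero_le _
    | cons hadj p ih =>
      rename_i u v z
      calc G.dist (u : Γ) (z : Γ) ≤ G.dist (u : Γ) (v : Γ) + G.dist (v : Γ) (z : Γ) :=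
            hcΓ.dist_triangle
        _ ≤ L + L * p.length := Nat.add_le_add (hedgeU u v hadj) ih
        _ = L * (SimpleGraph.Walk.cons hadj p).length := by
            rw [SimpleGraph.Walk.length_cons, Nat.mul_succ]
            omega
  have hupper : ∀ a b : ↥H, G.dist (a : Γ) (b : Γ) ≤ L * GH.dist a b := by
    intro a b
    obtain ⟨w, hw⟩ := hcH.exists_walk_length_eq_dist a b
    rw [← hw]
    exact hup a b w
  -- Part 1: lower bound
  have hballΓ : ({g : Γ | G.dist 1 g ≤ 2 * R + 1}).Finite := by
    refine ((growth (2 * R + 1) {1} (Set.finite_singleton 1)).1).subset ?_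
    intro g hg
    exact ⟨1, rfl, by rwa [SimpleGraph.dist_comm]⟩
  have hballH : ({h : ↥H | G.dist 1 (h : Γ) ≤ 2 * R + 1}).Finite := by
    have heq : ({h : ↥H | G.dist 1 (h : Γ) ≤ 2 * R + 1})
        = (Subtype.val) ⁻¹' {g : Γ | G.dist 1 g ≤ 2 * R + 1} := rfl
    rw [heq]
    exact Set.Finite.preimage (Set.injOn_of_injective Subtype.coe_injective) hballΓ
  set M : ℕ := hballH.toFinset.sup (fun h => GH.dist 1 h) with hMdef
  have hedgeD : ∀ x y : Γ, G.dist x y ≤ 1 → GH.dist (σ x) (σ y) ≤ M := by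
    intro x y hxy
    have hd : G.dist ((σ x : Γ)) ((σ y : Γ)) ≤ 2 * R + 1 := by
      have t1 : G.dist (σ x : Γ) (σ y : Γ) ≤ G.dist (σ x : Γ) x + G.dist x (σ y : Γ) :=
        hcΓ.dist_triangle
      have t2 : G.dist x (σ y : Γ) ≤ G.dist x y + G.dist y (σ y : Γ) := hcΓ.dist_triangle
      have h1 : G.dist (σ x : Γ) x = G.dist x (σ x : Γ) := SimpleGraph.dist_comm
      have h2 := hσdist x
      have h3 := hσdist y
      omega
    have hmem : (σ x)⁻¹ * σ y ∈ {h : ↥H | G.dist 1 (h : Γ) ≤ 2 * R + 1} := by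
      show G.dist 1 (((σ x)⁻¹ * σ y : ↥H) : Γ) ≤ 2 * R + 1
      have heq : (((σ x)⁻¹ * σ y : ↥H) : Γ) = (σ x : Γ)⁻¹ * (σ y : Γ) := by push_cast; rfl
      rw [heq, ← cayley_dist_eq]
      exact hd
    calc GH.dist (σ x) (σ y) = GH.dist 1 ((σ x)⁻¹ * σ y) := cayley_dist_eq _ _
      _ ≤ M := Finset.le_sup (f := fun h : ↥H => GH.dist 1 h) (hballH.mem_toFinset.mpr hmem)
  have hdownWalk : ∀ (x y : Γ) (w : G.Walk x y), GH.dist (σ x) (σ y) ≤ M * w.length := by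
    intro x y w
    induction w with
    | nil => rw [SimpleGraph.dist_self]; exact Nat.zero_le _
    | cons hadj p ih =>
      rename_i u v z
      calc GH.dist (σ u) (σ z) ≤ GH.dist (σ u) (σ v) + GH.dist (σ v) (σ z) :=
            hcH.dist_triangle
        _ ≤ M + M * p.length :=
            Nat.add_le_add (hedgeD u v (SimpleGraph.dist_le hadj.toWalk)) ih
        _ = M * (SimpleGraph.Walk.cons hadj p).length := by
            rw [SimpleGraph.Walk.length_cons, Nat.mul_succ]
            omega
  have hlower : ∀ a b : ↥H, GH.dist a b ≤ M * G.dist (a : Γ) (b : Γ) := by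
    intro a b
    obtain ⟨w, hw⟩ := hcΓ.exists_walk_length_eq_dist (a : Γ) (b : Γ)
    have := hdownWalk _ _ w
    rwa [hσH a, hσH b, hw] at this
  -- Assemble the quasi-isometry
  have hQI : IsQI GH G ((↑) : ↥H → Γ) := by
    set Cn : ℕ := max (max L M) 1 with hCn
    have hCpos : (0 : ℝ) < (Cn : ℝ) := by
      have : 1 ≤ Cn := le_max_right _ _
      exact_mod_cast Nat.lt_of_lt_of_le Nat.zero_lt_one this
    refine ⟨(Cn : ℝ), (R : ℝ), ?_, by positivity, ⟨?_, ?_⟩⟩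
    · exact_mod_cast Nat.one_le_cast.mpr (le_max_right _ _)
    · intro a b
      constructor
      · -- lower bound
        have h1 : (GH.dist a b : ℝ) ≤ (Cn : ℝ) * (G.dist (a : Γ) (b : Γ) : ℝ) := by
          have hn : GH.dist a b ≤ Cn * G.dist (a : Γ) (b : Γ) := by
            calc GH.dist a b ≤ M * G.dist (a : Γ) (b : Γ) := hlower a b
              _ ≤ Cn * G.dist (a : Γ) (b : Γ) :=
                  Nat.mul_le_mul_right _ (le_trans (le_max_right L M) (le_max_left _ 1))
          exact_mod_cast hn
        have h2 : (1 / (Cn : ℝ)) * (GH.dist a b : ℝ) ≤ (G.dist (a : Γ) (b : Γ) : ℝ) := by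
          rw [div_mul_eq_mul_div, one_mul, div_le_iff₀ hCpos]
          linarith [h1, mul_comm (Cn : ℝ) ((G.dist (a : Γ) (b : Γ) : ℝ))]
        have hR0 : (0 : ℝ) ≤ (R : ℝ) := by positivity
        linarith
      · -- upper bound
        have hn : G.dist (a : Γ) (b : Γ) ≤ Cn * GH.dist a b := by
          calc G.dist (a : Γ) (b : Γ) ≤ L * GH.dist a b := hupper a b
            _ ≤ Cn * GH.dist a b :=
                Nat.mul_le_mul_right _ (le_trans (le_max_left L M) (le_max_left _ 1))
        have hR0 : (0 : ℝ) ≤ (R : ℝ) := by positivity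
        have : (G.dist (a : Γ) (b : Γ) : ℝ) ≤ (Cn : ℝ) * (GH.dist a b : ℝ) := by
          exact_mod_cast hn
        linarith
    · intro y
      refine ⟨σ y, ?_⟩
      have := hσdist y
      exact_mod_cast this
  refine ⟨hQI, ?_⟩
  -- Part 2 : quasi-(1/k)-to-one
  refine ⟨(((D + 1) ^ R : ℕ) : ℝ), ?_, ?_⟩
  · have : 0 < (D + 1) ^ R := pow_pos (Nat.succ_pos D) R
    exact_mod_cast this
  intro A hA
  have hbdryfin : (gBdry G A).Finite := ((growth 1 A hA).1).subset Set.diff_subset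
  obtain ⟨hEfin, hEcard⟩ := growth R (gBdry G A) hbdryfin
  -- preimage is the fiber of the trivial coset
  have hfib1 : q ⁻¹' {q 1} = (H : Set Γ) := by
    ext x
    simp only [Set.mem_preimage, Set.mem_singleton_iff]
    rw [hq_iff x 1]
    simp
  have himg : (((↑) : ↥H → Γ) '' (((↑) : ↥H → Γ) ⁻¹' A)) = A ∩ (H : Set Γ) := by
    ext x
    simp only [Set.mem_image, Set.mem_preimage, Set.mem_inter_iff, SetLike.mem_coe]
    constructor
    · rintro ⟨y, hy, rfl⟩
      exact ⟨hy, y.2⟩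
    · rintro ⟨hxA, hxH⟩
      exact ⟨⟨x, hxH⟩, hxA, rfl⟩
  have hpre : ((((↑) : ↥H → Γ) ⁻¹' A).ncard : ℕ) = (A ∩ q ⁻¹' {q 1}).ncard := by
    rw [hfib1, ← himg, Set.ncard_image_of_injective _ Subtype.coe_injective]
  -- fiber decomposition of A
  have hfibcard : ∀ c : Γ ⧸ H,
      (A ∩ q ⁻¹' {c}).ncard = (hA.toFinset.filter (fun x => q x = c)).card := by
    intro c
    rw [← Set.ncard_coe_finset]
    congr 1
    ext x
    simp only [Set.mem_inter_iff, Set.mem_preimage, Set.mem_singleton_iff,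
      Finset.coe_filter, Set.mem_setOf_eq, Set.Finite.mem_toFinset]
  have hsumA : A.ncard = ∑ c : Γ ⧸ H, (A ∩ q ⁻¹' {c}).ncard := by
    rw [Set.ncard_eq_toFinset_card A hA]
    rw [Finset.card_eq_sum_card_fiberwise (f := q) (t := Finset.univ)
      (fun x _ => Finset.mem_univ _)]
    exact Finset.sum_congr rfl (fun c _ => (hfibcard c).symm)
  -- per-fiber comparison
  have hcomp : ∀ c : Γ ⧸ H,
      (A ∩ q ⁻¹' {c}).ncard ≤ (A ∩ q ⁻¹' {q 1}).ncard + (gNbhd G (gBdry G A) R).ncard ∧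
      (A ∩ q ⁻¹' {q 1}).ncard ≤ (A ∩ q ⁻¹' {c}).ncard + (gNbhd G (gBdry G A) R).ncard := by
    intro c
    constructor
    · refine count_shift hcΓ hA hEfin _ _ ((γfun c)⁻¹) ?_
        (by rw [cayley_dist_one_inv]; exact hγR c)
      intro x hx
      simp only [Set.mem_preimage, Set.mem_singleton_iff] at hx ⊢
      have hxH : x * (γfun c)⁻¹ ∈ H := by
        rw [← hq_iff, hqγ]
        exact hx
      rw [hq_iff _ 1]
      simpa using hxH
    · refine count_shift hcΓ hA hEfin _ _ (γfun c) ?_ (hγR c)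
      intro x hx
      simp only [Set.mem_preimage, Set.mem_singleton_iff] at hx ⊢
      have hxH : x ∈ H := by
        have := (hq_iff x 1).mp hx
        simpa using this
      have h2 : (x * γfun c) * (γfun c)⁻¹ ∈ H := by simpa using hxH
      have h3 := (hq_iff (x * γfun c) (γfun c)).mpr h2
      rw [h3]
      exact hqγ c
  -- real arithmetic
  set F : Γ ⧸ H → ℝ := fun c => ((A ∩ q ⁻¹' {c}).ncard : ℝ) with hFdef
  set En : ℝ := ((gNbhd G (gBdry G A) R).ncard : ℝ) with hEndef
  have habs : ∀ c : Γ ⧸ H, |F c - F (q 1)| ≤ En := by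
    intro c
    rw [abs_sub_le_iff]
    constructor
    · have h := (hcomp c).1
      have : F c ≤ F (q 1) + En := by
        simp only [hFdef, hEndef]
        exact_mod_cast h
      linarith
    · have h := (hcomp c).2
      have : F (q 1) ≤ F c + En := by
        simp only [hFdef, hEndef]
        exact_mod_cast h
      linarith
  have hk0 : (k : ℝ) ≠ 0 := by positivity
  have hprecast : ((((↑) : ↥H → Γ) ⁻¹' A).ncard : ℝ) = F (q 1) := by
    simp only [hFdef]
    exact_mod_cast hpre
  have hAsum : (A.ncard : ℝ) = ∑ c : Γ ⧸ H, F c := by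
    rw [hsumA]
    push_cast
    rfl
  have hstep : (1 / (k : ℝ)) * (A.ncard : ℝ) - ((((↑) : ↥H → Γ) ⁻¹' A).ncard : ℝ)
      = (1 / (k : ℝ)) * ∑ c : Γ ⧸ H, (F c - F (q 1)) := by
    rw [hprecast, hAsum, Finset.sum_sub_distrib, Finset.sum_const, Finset.card_univ,
      hcardQ, nsmul_eq_mul, mul_sub]
    congr 1
    field_simp
  calc |1 / (k : ℝ) * (A.ncard : ℝ) - ((((↑) : ↥H → Γ) ⁻¹' A).ncard : ℝ)|
      = |(1 / (k : ℝ)) * ∑ c : Γ ⧸ H, (F c - F (q 1))| := by rw [hstep]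
    _ ≤ (1 / (k : ℝ)) * ∑ c : Γ ⧸ H, |F c - F (q 1)| := by
        rw [abs_mul, abs_of_nonneg (by positivity : (0 : ℝ) ≤ 1 / (k : ℝ))]
        exact mul_le_mul_of_nonneg_left (Finset.abs_sum_le_sum_abs _ _) (by positivity)
    _ ≤ (1 / (k : ℝ)) * ((k : ℝ) * En) := by
        refine mul_le_mul_of_nonneg_left ?_ (by positivity)
        calc ∑ c : Γ ⧸ H, |F c - F (q 1)| ≤ ∑ _c : Γ ⧸ H, En :=
              Finset.sum_le_sum (fun c _ => habs c)
          _ = (k : ℝ) * En := by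
              rw [Finset.sum_const, Finset.card_univ, hcardQ, nsmul_eq_mul]
    _ = En := by field_simp
    _ ≤ (((D + 1) ^ R : ℕ) : ℝ) * ((gBdry G A).ncard : ℝ) := by
        rw [hEndef]
        exact_mod_cast hEcard
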